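/- arXiv:1202.3597 — 2 statements merged into one kernel-verified Lean document; each statement's English description precedes it below -/
import Mathlib

section
/- Let R be a commutative Noetherian regular ring with unity containing a field F of characteristic 0 such that R is equidimensional of dimension n (every maximal ideal has height n) and every residue field R/m at a maximal ideal m is an algebraic extension of F. Suppose there exist F-linear derivations ∂₁, …, ∂_n of R and elements a₁, …, a_n ∈ R such that ∂ᵢ(aⱼ) = 1 if i = j and ∂ᵢ(aⱼ) = 0 if i ≠ j. Then Der_F(R) is a finitely generated projective R-module of rank n, and for every maximal ideal m of R the canonical map R_m ⊗_R Der_F(R) → Der_F(R_m) is an isomorphism; that is, R satisfies Hypothesis H over F. -/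
/-- A Noetherian local ring is *regular* if its Krull dimension equals the dimension of its
cotangent space (the minimal number of generators of the maximal ideal). -/
def IsRegularLocal (A : Type*) [CommRing A] [IsLocalRing A] : Prop :=
  IsNoetherianRing A ∧
    ringKrullDim A =
      Module.finrank (IsLocalRing.ResidueField A) (IsLocalRing.CotangentSpace A)

/-- A commutative ring is *regular* if all of its localizations at primes are regular local. -/
def IsRegularRing' (R : Type*) [CommRing R] : Prop :=
  ∀ (P : Ideal R) (_ : P.IsPrime), IsRegularLocal (Localization.AtPrime P)

/-- Hypothesis H: `R` is a commutative Noetherian regular ring containing a field `F` of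
characteristic `0` such that (1) `R` is equidimensional of dimension `n`, (2) every residue
field at a maximal ideal is algebraic over `F`, and (3) `Der_F(R)` is a finitely generated
projective `R`-module of rank `n` whose localization at every maximal ideal `m` is the module
of `F`-linear derivations of `R_m` (via the canonical map). -/
structure HypothesisH (F : Type*) (R : Type*) [Field F] [CommRing R] [Algebra F R]
    (n : ℕ) : Prop where
  charZero : CharZero F
  noetherian : IsNoetherianRing R
  regular : IsRegularRing' R
  equidim : ∀ (m : Ideal R) (_ : m.IsMaximal), ringKrullDim (Localization.AtPrime m) = n
  residue_algebraic : ∀ (m : Ideal R) (_ : m.IsMaximal), Algebra.IsAlgebraic F (R ⧸ m)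
  der_finite : Module.Finite R (Derivation F R R)
  der_projective : Module.Projective R (Derivation F R R)
  der_free_rank : ∀ (m : Ideal R) (_ : m.IsMaximal),
    Module.Free (Localization.AtPrime m) (LocalizedModule m.primeCompl (Derivation F R R)) ∧
      Module.finrank (Localization.AtPrime m)
        (LocalizedModule m.primeCompl (Derivation F R R)) = n
  der_localize : ∀ (m : Ideal R) (_ : m.IsMaximal),
    ∃ g : Derivation F R R →ₗ[R]
        Derivation F (Localization.AtPrime m) (Localization.AtPrime m),
      (∀ (δ : Derivation F R R) (r : R),
          g δ (algebraMap R (Localization.AtPrime m) r)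
            = algebraMap R (Localization.AtPrime m) (δ r)) ∧
        IsLocalizedModule m.primeCompl g



open Polynomial IsLocalRing
section Aux
variable {F A : Type*} [Field F] [CommRing A] [Algebra F A]

/-- chain rule for derivations on polynomials -/
lemma aux_deriv_aeval (d : Derivation F A A) (p : F[X]) (b : A) :
    d (aeval b p) = aeval b (derivative p) * d b := by
  induction p using Polynomial.induction_on with
  | C f => simp
  | add p q hp hq => simp [hp, hq, add_mul]
  | monomial k c hk =>
      simp only [map_mul, aeval_C, aeval_X_pow, derivative_C_mul, derivative_X_pow,
        Derivation.leibniz, Derivation.leibniz_pow, map_pow]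
      rw [show d ((algebraMap F A) c) = 0 from Derivation.map_algebraMap d c]
      push_cast
      simp only [smul_eq_mul, aeval_X, mul_zero, add_zero]
      ring

/-- Leibniz rule on powers of an ideal. -/
lemma aux_deriv_pow (d : Derivation F A A) {I J : Ideal A}
    (hIJ : ∀ u ∈ I, d u ∈ J) :
    ∀ j, ∀ v ∈ I ^ (j + 1), d v ∈ I ^ j * J := by
  intro j
  induction j with
  | zero => intro v hv; simpa using hIJ v (by simpa using hv)
  | succ j ih =>
      intro v hv
      rw [pow_succ] at hv
      refine Submodule.mul_induction_on hv (fun x hx y hy => ?_) (fun x y hx hy => ?_)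
      · rw [Derivation.leibniz, smul_eq_mul, smul_eq_mul]
        refine Ideal.add_mem _ ?_ ?_
        · -- x ∈ I^(j+1), y ∈ I : x * d y ∈ I^(j+1) * J
          exact Ideal.mul_mem_mul hx (hIJ y hy)
        · -- y * d x, d x ∈ I^j * J
          have := ih x hx
          have h2 : y * d x ∈ I * (I ^ j * J) := Ideal.mul_mem_mul hy this
          rw [← mul_assoc, ← pow_succ'] at h2
          exact h2
      · simpa using Ideal.add_mem _ hx hy

/-- congruence of polynomial evaluation mod an ideal -/
lemma aux_aeval_sub_mem {I : Ideal A} {x y : A} (hxy : x - y ∈ I) (p : F[X]) :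
    aeval x p - aeval y p ∈ I := by
  have h : Ideal.Quotient.mk I (aeval x p) = Ideal.Quotient.mk I (aeval y p) := by
    have hx : (Ideal.Quotient.mk I) x = Ideal.Quotient.mk I y := Ideal.Quotient.eq.mpr hxy
    have e1 : Ideal.Quotient.mk I (aeval x p) = aeval (Ideal.Quotient.mk I x) p :=
      (aeval_algHom_apply (Ideal.Quotient.mkₐ F I) x p).symm
    have e2 : Ideal.Quotient.mk I (aeval y p) = aeval (Ideal.Quotient.mk I y) p :=
      (aeval_algHom_apply (Ideal.Quotient.mkₐ F I) y p).symm
    rw [e1, e2, hx]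
  exact Ideal.Quotient.eq.mp h

section LocalA
variable [IsLocalRing A]

lemma aux_unit_of_sub_mem {x y : A} (hxy : x - y ∈ maximalIdeal A) (hy : IsUnit y) :
    IsUnit x := by
  by_contra hx
  have hxm : x ∈ maximalIdeal A := hx
  have : y ∈ maximalIdeal A := by
    have := Ideal.sub_mem _ hxm hxy
    simpa using this
  exact (IsLocalRing.mem_maximalIdeal y).mp this hy

/-- Newton iteration: improve an approximate root of `p` to arbitrary `m`-adic precision. -/
lemma aux_newton (p : F[X]) (b₀ : A) (h0 : aeval b₀ p ∈ maximalIdeal A)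
    (h1 : IsUnit (aeval b₀ (derivative p))) (N : ℕ) (hN : 1 ≤ N) :
    ∃ b : A, b - b₀ ∈ maximalIdeal A ∧ aeval b p ∈ (maximalIdeal A) ^ N ∧
      IsUnit (aeval b (derivative p)) := by
  induction N with
  | zero => omega
  | succ N ih =>
    rcases Nat.eq_or_lt_of_le hN with hN1 | hN2
    · exact ⟨b₀, by simp, by rw [← hN1]; simpa using h0, h1⟩
    · obtain ⟨b, hb₀, hbp, hbu⟩ := ih (by omega)
      set u : A := ↑hbu.unit⁻¹ with hu
      have huu : aeval b (derivative p) * u = 1 := by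
        rw [hu]; exact hbu.mul_val_inv
      set h : A := -(aeval b p * u) with hh
      have hhm : h ∈ (maximalIdeal A) ^ N := by
        rw [hh]; exact neg_mem (Ideal.mul_mem_right _ _ hbp)
      refine ⟨b + h, ?_, ?_, ?_⟩
      · have hhm1 : h ∈ maximalIdeal A := Ideal.pow_le_self (by omega) hhm
        have : b + h - b₀ = (b - b₀) + h := by ring
        rw [this]; exact Ideal.add_mem _ hb₀ hhm1
      · -- key computation
        obtain ⟨k, hk⟩ := (p.map (algebraMap F A)).binomExpansion b h
        have hev : ∀ q : F[X], ∀ x : A, aeval x q = (q.map (algebraMap F A)).eval x := by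
          intro q x; rw [eval_map, aeval_def]
        have hk' : aeval (b + h) p = aeval b p + aeval b (derivative p) * h + k * h ^ 2 := by
          rw [hev p, hev p, hev (derivative p), ← derivative_map]; exact hk
        have hmain : aeval b p + aeval b (derivative p) * h = 0 := by
          rw [hh]
          have : aeval b (derivative p) * -(aeval b p * u) =
              -(aeval b (derivative p) * u * aeval b p) := by ring
          rw [this, huu]; ring
        rw [hk', hmain, zero_add]
        have h2 : h ^ 2 ∈ (maximalIdeal A) ^ (2 * N) := by
          rw [two_mul, pow_add, sq]; exact Ideal.mul_mem_mul hhm hhm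
        have hle : (maximalIdeal A) ^ (2 * N) ≤ (maximalIdeal A) ^ (N + 1) :=
          Ideal.pow_le_pow_right (by omega)
        exact Ideal.mul_mem_left _ _ (hle h2)
      · refine aux_unit_of_sub_mem ?_ h1
        have : aeval (b + h) (derivative p) - aeval b₀ (derivative p) =
            (aeval (b + h) (derivative p) - aeval b (derivative p)) +
            (aeval b (derivative p) - aeval b₀ (derivative p)) := by ring
        rw [this]
        refine Ideal.add_mem _ (aux_aeval_sub_mem (by simpa using Ideal.pow_le_self (by omega) hhm) _)
          (aux_aeval_sub_mem hb₀ _)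
end LocalA
end Aux
open Polynomial IsLocalRing

section Core
variable {F A : Type*} [Field F] [CommRing A] [Algebra F A] [IsLocalRing A]

/-- If `d` maps the maximal ideal into `m^t`, it maps everything into `m^t`
(residues being "algebraic"). -/
lemma aux_F1
    (hAR : ∀ x : A, ∃ p : F[X], aeval x p ∈ maximalIdeal A ∧
      IsUnit (aeval x (derivative p)))
    (d : Derivation F A A) (t : ℕ)
    (hd : ∀ u ∈ maximalIdeal A, d u ∈ maximalIdeal A ^ t) (x : A) :
    d x ∈ maximalIdeal A ^ t := by
  obtain ⟨p, hp, hp'⟩ := hAR x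
  have h1 : d (aeval x p) ∈ maximalIdeal A ^ t := hd _ hp
  rw [aux_deriv_aeval] at h1
  have : d x = ↑hp'.unit⁻¹ * (aeval x (derivative p) * d x) := by
    rw [← mul_assoc]
    rw [show (↑hp'.unit⁻¹ * aeval x (derivative p)) = 1 from hp'.val_inv_mul]
    rw [one_mul]
  rw [this]
  exact Ideal.mul_mem_left _ _ h1

/-- key local lemma: a derivation killing the `a i` is zero. -/
lemma core_local {n : ℕ} [IsNoetherianRing A]
    (hAR : ∀ x : A, ∃ p : F[X], aeval x p ∈ maximalIdeal A ∧
      IsUnit (aeval x (derivative p)))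
    (hdim : Module.finrank (ResidueField A) (CotangentSpace A) = n)
    (D : Fin n → Derivation F A A) (a : Fin n → A)
    (hD : ∀ i j, D i (a j) = if i = j then 1 else 0)
    (d : Derivation F A A) (hda : ∀ i, d (a i) = 0) : d = 0 := by
  set m : Ideal A := maximalIdeal A with hm
  -- a general Leibniz estimate for any derivation
  have leib : ∀ (δ : Derivation F A A) (t : ℕ),
      (∀ u ∈ m, δ u ∈ m ^ t) → ∀ j, ∀ v ∈ m ^ (j + 1), δ v ∈ m ^ (j + t) := by
    intro δ t ht j v hv
    have := aux_deriv_pow δ ht j v hv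
    rwa [← pow_add] at this
  have leib0 : ∀ (δ : Derivation F A A), ∀ j, ∀ v ∈ m ^ (j + 1), δ v ∈ m ^ j := by
    intro δ j v hv
    have h0 : ∀ u ∈ m, δ u ∈ m ^ 0 := by intro u _; simp
    simpa using leib δ 0 h0 j v hv
  have main : ∀ t, ∀ u ∈ m, d u ∈ m ^ t := by
    intro t
    induction t with
    | zero => intro u _; simp
    | succ t ih =>
      choose p hp hp' using fun i => hAR (a i)
      choose b hb1 hb2 hb3 using fun i =>
        aux_newton (p i) (a i) (hp i) (hp' i) (t + 2) (by omega)
      set x : Fin n → A := fun i => a i - b i with hxdef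
      have hxm : ∀ i, x i ∈ m := by
        intro i
        have := neg_mem (hb1 i)
        rw [neg_sub] at this
        exact this
      have hdb : ∀ i, d (b i) ∈ m ^ (t + 1) := by
        intro i
        have h1 : d (aeval (b i) (p i)) ∈ m ^ (t + 1 + t) :=
          leib d t ih (t + 1) _ (hb2 i)
        have h2 : d (aeval (b i) (p i)) ∈ m ^ (t + 1) :=
          Ideal.pow_le_pow_right (by omega) h1
        rw [aux_deriv_aeval] at h2
        have : d (b i) = ↑(hb3 i).unit⁻¹ * (aeval (b i) (derivative (p i)) * d (b i)) := by
          rw [← mul_assoc, (hb3 i).val_inv_mul, one_mul]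
        rw [this]
        exact Ideal.mul_mem_left _ _ h2
      have hdx : ∀ i, d (x i) ∈ m ^ (t + 1) := by
        intro i
        have : d (x i) = d (a i) - d (b i) := by simp [hxdef]
        rw [this, hda i, zero_sub]
        exact neg_mem (hdb i)
      have hDb : ∀ j i, D j (b i) ∈ m := by
        intro j i
        have h1 : D j (aeval (b i) (p i)) ∈ m ^ (t + 1) := leib0 (D j) (t + 1) _ (hb2 i)
        have h2 : D j (aeval (b i) (p i)) ∈ m := Ideal.pow_le_self (by omega) h1
        rw [aux_deriv_aeval] at h2
        have : D j (b i) = ↑(hb3 i).unit⁻¹ * (aeval (b i) (derivative (p i)) * D j (b i)) := by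
          rw [← mul_assoc, (hb3 i).val_inv_mul, one_mul]
        rw [this]
        exact Ideal.mul_mem_left _ _ h2
      have hDx : ∀ j i, D j (x i) - (if j = i then 1 else 0) ∈ m := by
        intro j i
        have : D j (x i) - (if j = i then 1 else 0) = - D j (b i) := by
          have : D j (x i) = D j (a i) - D j (b i) := by simp [hxdef]
          rw [this, hD j i]
          ring
        rw [this]
        exact neg_mem (hDb j i)
      -- the x i generate m
      have hspan : Submodule.span A (Set.range fun i => (⟨x i, hxm i⟩ : m)) = ⊤ := by
        rcases Nat.eq_zero_or_pos n with hn | hn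
        · -- n = 0 : A is a field, m = ⊥
          subst hn
          have hfield : IsField A := finrank_cotangentSpace_eq_zero_iff.mp hdim
          have hbot : m = ⊥ := (IsLocalRing.isField_iff_maximalIdeal_eq).mp hfield
          rw [eq_top_iff]
          rintro ⟨z, hz⟩ _
          have : z = 0 := by rwa [hbot, Ideal.mem_bot] at hz
          have : (⟨z, hz⟩ : m) = 0 := Subtype.ext this
          rw [this]
          exact Submodule.zero_mem _
        · haveI : Nonempty (Fin n) := Fin.pos_iff_nonempty.mp hn
          set xt : Fin n → m := fun i => (⟨x i, hxm i⟩ : m) with hxt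
          set v : Fin n → CotangentSpace A := fun i => m.toCotangent (xt i) with hv
          have hind : LinearIndependent (ResidueField A) v := by
            rw [Fintype.linearIndependent_iff]
            intro g hg i
            choose c hc using fun i => IsLocalRing.residue_surjective (R := A) (g i)
            have hsum : ∑ j, g j • v j = m.toCotangent (∑ j, c j • xt j) := by
              rw [map_sum]
              congr 1
              funext j
              rw [map_smul, ← hc j, ← IsLocalRing.ResidueField.algebraMap_eq,
                algebraMap_smul]
            rw [hsum] at hg
            have hw : ((∑ j, c j • xt j : m) : A) ∈ m ^ 2 := by
              rwa [Ideal.toCotangent_eq_zero] at hg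
            have hwcoe : ((∑ j, c j • xt j : m) : A) = ∑ j, c j * x j := by
              push_cast [hxt]
              rfl
            rw [hwcoe] at hw
            -- apply D i
            have hDiw : D i (∑ j, c j * x j) ∈ m := by
              have := leib0 (D i) 1 _ (by simpa using hw)
              simpa using this
            have hexp : D i (∑ j, c j * x j) =
                ∑ j, (c j * D i (x j) + x j * D i (c j)) := by
              rw [map_sum]
              congr 1
              funext j
              rw [Derivation.leibniz]
              simp [smul_eq_mul, mul_comm]
            -- pass to the residue field
            have h0 : IsLocalRing.residue A (D i (∑ j, c j * x j)) = 0 :=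
              (Ideal.Quotient.eq_zero_iff_mem).mpr hDiw
            rw [hexp] at h0
            have hterm : ∀ j, IsLocalRing.residue A (c j * D i (x j) + x j * D i (c j)) =
                (if i = j then g i else 0) := by
              intro j
              have hxj0 : IsLocalRing.residue A (x j) = 0 :=
                (Ideal.Quotient.eq_zero_iff_mem).mpr (hxm j)
              have hDixj : IsLocalRing.residue A (D i (x j)) =
                  IsLocalRing.residue A (if i = j then 1 else 0) :=
                Ideal.Quotient.eq.mpr (hDx i j)
              rw [map_add, map_mul, map_mul, hxj0, zero_mul, add_zero, hDixj]
              by_cases hij : i = j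
              · subst hij
                simp [hc]
              · simp [hij]
            rw [map_sum] at h0
            simp_rw [hterm] at h0
            rw [Finset.sum_ite_eq (Finset.univ) i (fun _ => g i)] at h0
            simpa using h0
          have hcard : Fintype.card (Fin n) = Module.finrank (ResidueField A) (CotangentSpace A) := by
            simpa using hdim.symm
          have hsp := hind.span_eq_top_of_card_eq_finrank hcard
          have hrange : Set.range v = ⇑m.toCotangent '' Set.range xt := by
            rw [← Set.range_comp]; rfl
          have : Submodule.span (ResidueField A) (⇑m.toCotangent '' Set.range xt) = ⊤ := by
            rwa [hrange] at hsp
          exact (IsLocalRing.CotangentSpace.span_image_eq_top_iff).mp this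
      intro u hu
      have humem : (⟨u, hu⟩ : m) ∈ Submodule.span A (Set.range fun i => (⟨x i, hxm i⟩ : m)) := by
        rw [hspan]; trivial
      obtain ⟨c, hc⟩ := (Submodule.mem_span_range_iff_exists_fun A).mp humem
      have hcu : ∑ i, c i * x i = u := by
        have := congrArg (Subtype.val) hc
        push_cast at this
        simpa using this
      have hdu : d u = ∑ i, (c i * d (x i) + x i * d (c i)) := by
        rw [← hcu, map_sum]
        congr 1
        funext i
        rw [Derivation.leibniz]
        simp [smul_eq_mul, mul_comm]
      rw [hdu]
      refine Ideal.sum_mem _ fun i _ => Ideal.add_mem _ ?_ ?_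
      · exact Ideal.mul_mem_left _ _ (hdx i)
      · have h1 : d (c i) ∈ m ^ t := aux_F1 hAR d t ih (c i)
        have h2 : x i * d (c i) ∈ m * m ^ t := Ideal.mul_mem_mul (hxm i) h1
        rwa [← pow_succ'] at h2
  -- conclusion
  ext y
  have hall : ∀ t, d y ∈ m ^ t := fun t => aux_F1 hAR d t (main t) y
  have : d y ∈ ⨅ t : ℕ, m ^ t := Ideal.mem_iInf.mpr hall
  rw [Ideal.iInf_pow_eq_bot_of_isLocalRing m (Ideal.IsMaximal.ne_top (maximalIdeal.isMaximal A))]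
    at this
  simpa using this

end Core


section Ext
variable {F R : Type*} [Field F] [CommRing R] [Algebra F R]
variable (S : Submonoid R) (A : Type*) [CommRing A] [Algebra R A] [Algebra F A]
  [IsScalarTower F R A] [IsLocalization S A]

/-- the ring hom `R → A[ε]`, `r ↦ (r, d r)`. -/
noncomputable def derToDual (d : Derivation F R R) : R →+* DualNumber A where
  toFun r := ⟨algebraMap R A r, algebraMap R A (d r)⟩
  map_one' := by
    refine TrivSqZeroExt.ext ?_ ?_ <;> simp
  map_mul' x y := by
    refine TrivSqZeroExt.ext ?_ ?_
    · simp [TrivSqZeroExt.fst_mul]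
      rfl
    · simp only [TrivSqZeroExt.snd_mul, TrivSqZeroExt.fst_mk, TrivSqZeroExt.snd_mk,
        Derivation.leibniz, map_add, map_mul, smul_eq_mul, op_smul_eq_smul]
      change _ = algebraMap R A x • algebraMap R A (d y) +
        MulOpposite.op (algebraMap R A y) • algebraMap R A (d x)
      simp only [smul_eq_mul, op_smul_eq_smul]
  map_zero' := by refine TrivSqZeroExt.ext ?_ ?_ <;> simp
  map_add' x y := by
    refine TrivSqZeroExt.ext ?_ ?_ <;> simp <;> rfl

lemma derToDual_units (d : Derivation F R R) (s : S) :
    IsUnit (derToDual (A := A) d s) := by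
  rw [TrivSqZeroExt.isUnit_iff_isUnit_fst]
  exact IsLocalization.map_units A s

/-- the lift `A → A[ε]`. -/
noncomputable def dualLift (d : Derivation F R R) : A →+* DualNumber A :=
  IsLocalization.lift (derToDual_units S A d)

lemma dualLift_algebraMap (d : Derivation F R R) (r : R) :
    dualLift S A d (algebraMap R A r) = derToDual (A := A) d r :=
  IsLocalization.lift_eq _ _

lemma dualLift_fst (d : Derivation F R R) (x : A) : (dualLift S A d x).fst = x := by
  have : ((TrivSqZeroExt.fstHom A A A).toRingHom.comp (dualLift S A d)) = RingHom.id A := by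
    apply IsLocalization.ringHom_ext S
    ext r
    simp only [RingHom.comp_apply, RingHom.id_apply, dualLift_algebraMap]
    rfl
  exact congrArg (fun f => f x) this

/-- Extension of an `F`-derivation to a localization. -/
noncomputable def extDer (d : Derivation F R R) : Derivation F A A where
  toFun x := (dualLift S A d x).snd
  map_add' x y := by simp
  map_smul' f x := by
    have hx : f • x = algebraMap F A f * x := Algebra.smul_def f x
    have h1 : (algebraMap F A f) = algebraMap R A (algebraMap F R f) :=
      (IsScalarTower.algebraMap_apply F R A f)
    have hsnd : (dualLift S A d (algebraMap F A f)).snd = 0 := by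
      rw [h1, dualLift_algebraMap]
      show algebraMap R A (d (algebraMap F R f)) = 0
      rw [Derivation.map_algebraMap, map_zero]
    have hfst : (dualLift S A d (algebraMap F A f)).fst = algebraMap F A f :=
      dualLift_fst S A d _
    simp only [RingHom.id_apply]
    rw [hx, map_mul, TrivSqZeroExt.snd_mul, hsnd, hfst, dualLift_fst]
    simp only [op_smul_eq_smul, smul_eq_mul, smul_zero, add_zero]
    rw [← Algebra.smul_def f]
  map_one_eq_zero' := by
    show (dualLift S A d 1).snd = 0
    rw [map_one]
    rfl
  leibniz' x y := by
    show (dualLift S A d (x * y)).snd =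
      x • (dualLift S A d y).snd + y • (dualLift S A d x).snd
    rw [map_mul, TrivSqZeroExt.snd_mul, dualLift_fst, dualLift_fst]
    simp only [op_smul_eq_smul]

lemma extDer_algebraMap (d : Derivation F R R) (r : R) :
    extDer S A d (algebraMap R A r) = algebraMap R A (d r) := by
  show (dualLift S A d (algebraMap R A r)).snd = _
  rw [dualLift_algebraMap]
  rfl

end Ext

section Bridge
variable {F : Type*} [Field F] [CharZero F]

lemma aux_minpoly_deriv_ne_zero {K : Type*} [CommRing K] [Nontrivial K] [Algebra F K] (z : K)
    (hint : IsIntegral F z) : aeval z (derivative (minpoly F z)) ≠ 0 := by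
  have hp0 : minpoly F z ≠ 0 := minpoly.ne_zero hint
  have hdeg : 0 < (minpoly F z).natDegree := minpoly.natDegree_pos hint
  have hd0 : derivative (minpoly F z) ≠ 0 := by
    intro hcon
    have := Polynomial.natDegree_eq_zero_of_derivative_eq_zero hcon
    omega
  intro hcon
  have hle := minpoly.degree_le_of_ne_zero F z hd0 hcon
  have hlt := Polynomial.degree_derivative_lt hp0
  exact absurd (lt_of_le_of_lt hle hlt) (lt_irrefl _)

variable {R : Type*} [CommRing R] [Algebra F R]

/-- every element of a localization at a maximal ideal is congruent mod the maximal ideal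
to the image of an element of `R`. -/
lemma aux_loc_residue_surj (m : Ideal R) [m.IsMaximal] (x : Localization.AtPrime m) :
    ∃ r : R, x - algebraMap R (Localization.AtPrime m) r ∈
      maximalIdeal (Localization.AtPrime m) := by
  obtain ⟨⟨r, s⟩, hx⟩ := IsLocalization.mk'_surjective m.primeCompl x
  have hs : (s : R) ∉ m := s.2
  obtain ⟨t, c, hc, htc⟩ := (Ideal.IsMaximal.exists_inv (inferInstance) hs)
  refine ⟨t * r, ?_⟩
  have hu : IsUnit (algebraMap R (Localization.AtPrime m) (s : R)) :=
    IsLocalization.map_units _ s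
  have key : (x - algebraMap R (Localization.AtPrime m) (t * r)) *
      algebraMap R (Localization.AtPrime m) (s : R) =
      algebraMap R (Localization.AtPrime m) (r * (1 - t * s)) := by
    have hxs : x * algebraMap R (Localization.AtPrime m) (s : R) =
        algebraMap R (Localization.AtPrime m) r := by
      rw [← hx]; exact IsLocalization.mk'_spec _ r s
    rw [sub_mul, hxs, ← map_mul, ← map_sub]
    congr 1
    ring
  have hmem : algebraMap R (Localization.AtPrime m) (r * (1 - t * s)) ∈
      maximalIdeal (Localization.AtPrime m) := by
    rw [IsLocalization.AtPrime.to_map_mem_maximal_iff _ m]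
    refine Ideal.mul_mem_left _ _ ?_
    have : (1 : R) - t * s = c := by linear_combination htc.symm
    rw [this]; exact hc
  have hmem2 : (x - algebraMap R (Localization.AtPrime m) (t * r)) *
      algebraMap R (Localization.AtPrime m) (s : R) ∈
      maximalIdeal (Localization.AtPrime m) := key ▸ hmem
  exact (Ideal.unit_mul_mem_iff_mem _ hu).mp (by rwa [mul_comm] at hmem2)

set_option maxHeartbeats 1000000 in
/-- residues in the localization at a maximal ideal are "separably algebraic" over F. -/
lemma aux_loc_hAR (m : Ideal R) [m.IsMaximal] (hRes : Algebra.IsAlgebraic F (R ⧸ m))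
    (x : Localization.AtPrime m) :
    ∃ p : Polynomial F, aeval x p ∈ maximalIdeal (Localization.AtPrime m) ∧
      IsUnit (aeval x (derivative p)) := by
  obtain ⟨r, hr⟩ := aux_loc_residue_surj m x
  set z : R ⧸ m := Ideal.Quotient.mk m r with hz
  have halg : IsAlgebraic F z := hRes.isAlgebraic z
  have haev : ∀ q : Polynomial F,
      aeval (algebraMap R (Localization.AtPrime m) r) q =
        algebraMap R (Localization.AtPrime m) (aeval r q) := by
    intro q
    simpa using (aeval_algHom_apply (IsScalarTower.toAlgHom F R (Localization.AtPrime m)) r q)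
  have haev2 : ∀ q : Polynomial F,
      Ideal.Quotient.mk m (aeval r q) = aeval z q := by
    intro q
    simpa using (aeval_algHom_apply (Ideal.Quotient.mkₐ F m) r q).symm
  refine ⟨minpoly F z, ?_, ?_⟩
  · have h1 : aeval x (minpoly F z) - aeval (algebraMap R (Localization.AtPrime m) r)
        (minpoly F z) ∈ maximalIdeal (Localization.AtPrime m) :=
      aux_aeval_sub_mem hr _
    have h3 : aeval r (minpoly F z) ∈ m := by
      have := haev2 (minpoly F z)
      rw [minpoly.aeval] at this
      exact Ideal.Quotient.eq_zero_iff_mem.mp this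
    have h4 : aeval (algebraMap R (Localization.AtPrime m) r) (minpoly F z) ∈
        maximalIdeal (Localization.AtPrime m) := by
      rw [haev, IsLocalization.AtPrime.to_map_mem_maximal_iff _ m]
      exact h3
    have := Ideal.add_mem _ h1 h4
    simpa using this
  · by_contra hnotunit
    have hmem : aeval x (derivative (minpoly F z)) ∈ maximalIdeal (Localization.AtPrime m) :=
      (IsLocalRing.mem_maximalIdeal _).mpr hnotunit
    have h1 : aeval (algebraMap R (Localization.AtPrime m) r) (derivative (minpoly F z)) -
        aeval x (derivative (minpoly F z)) ∈ maximalIdeal (Localization.AtPrime m) :=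
      aux_aeval_sub_mem (by simpa using neg_mem hr) _
    have h4 : aeval (algebraMap R (Localization.AtPrime m) r) (derivative (minpoly F z)) ∈
        maximalIdeal (Localization.AtPrime m) := by
      have := Ideal.add_mem _ h1 hmem
      simpa using this
    rw [haev, IsLocalization.AtPrime.to_map_mem_maximal_iff _ m] at h4
    have h5 : aeval z (derivative (minpoly F z)) = 0 := by
      rw [← haev2, Ideal.Quotient.eq_zero_iff_mem]
      exact h4
    exact aux_minpoly_deriv_ne_zero z halg.isIntegral h5

end Bridge

section PiLoc
variable {R : Type*} [CommRing R] (S : Submonoid R) (A : Type*) [CommRing A] [Algebra R A]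
  [IsLocalization S A] (n : ℕ)

/-- the componentwise localization map on finite tuples -/
noncomputable def piLocMap : (Fin n → R) →ₗ[R] (Fin n → A) :=
  LinearMap.compLeft (Algebra.linearMap R A) (Fin n)

lemma piLocMap_apply (v : Fin n → R) (i : Fin n) :
    piLocMap A n v i = algebraMap R A (v i) := rfl

lemma isLocalizedModule_piLocMap : IsLocalizedModule S (piLocMap A n) := by
  constructor
  · intro s
    rw [Module.End.isUnit_iff]
    have hu : IsUnit (algebraMap R A (s : R)) := IsLocalization.map_units A s
    constructor
    · intro v w hvw
      funext i
      have h1 : (s : R) • (v i) = (s : R) • (w i) := by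
        have := congrFun hvw i
        simpa [Module.algebraMap_end_apply] using this
      rw [Algebra.smul_def, Algebra.smul_def] at h1
      exact hu.mul_left_cancel h1
    · intro v
      refine ⟨fun i => ↑hu.unit⁻¹ * v i, ?_⟩
      funext i
      simp only [Module.algebraMap_end_apply, Pi.smul_apply]
      rw [Algebra.smul_def, ← mul_assoc, hu.mul_val_inv, one_mul]
  · intro y
    have hy := fun i => IsLocalization.surj S (y i)
    choose p hp using hy
    refine ⟨⟨fun i => (p i).1 * ∏ j ∈ Finset.univ.erase i, ((p j).2 : R), ∏ j, (p j).2⟩, ?_⟩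
    funext i
    have hcoe : ((∏ j, (p j).2 : S) : R) = ∏ j, ((p j).2 : R) := by
      simp
    show (∏ j, (p j).2 : S) • y i = algebraMap R A ((p i).1 * ∏ j ∈ Finset.univ.erase i, ((p j).2 : R))
    rw [Submonoid.smul_def, hcoe, Algebra.smul_def, map_prod]
    rw [← Finset.mul_prod_erase Finset.univ _ (Finset.mem_univ i)]
    rw [map_mul, map_prod]
    calc algebraMap R A ((p i).2 : R) * (∏ j ∈ Finset.univ.erase i, algebraMap R A ((p j).2 : R)) * y i
        = (y i * algebraMap R A ((p i).2 : R)) * (∏ j ∈ Finset.univ.erase i, algebraMap R A ((p j).2 : R)) := by ring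
      _ = algebraMap R A ((p i).1) * (∏ j ∈ Finset.univ.erase i, algebraMap R A ((p j).2 : R)) := by rw [hp i]
      _ = _ := by ring
  · intro x₁ x₂ hx
    have h := fun i => congrFun hx i
    have h2 : ∀ i, ∃ c : S, (c : R) * x₁ i = (c : R) * x₂ i := by
      intro i
      obtain ⟨c, hc⟩ := (IsLocalization.eq_iff_exists S A).mp (h i)
      exact ⟨c, hc⟩
    choose c hc using h2
    refine ⟨∏ j, c j, ?_⟩
    funext i
    show ((∏ j, c j : S)) • x₁ i = ((∏ j, c j : S)) • x₂ i
    rw [Submonoid.smul_def, Submonoid.smul_def]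
    have hcoe : ((∏ j, c j : S) : R) = ∏ j, (c j : R) := by simp
    rw [hcoe, smul_eq_mul, smul_eq_mul,
      ← Finset.mul_prod_erase Finset.univ _ (Finset.mem_univ i)]
    calc (c i : R) * (∏ j ∈ Finset.univ.erase i, (c j : R)) * x₁ i
        = (∏ j ∈ Finset.univ.erase i, (c j : R)) * ((c i : R) * x₁ i) := by ring
      _ = (∏ j ∈ Finset.univ.erase i, (c j : R)) * ((c i : R) * x₂ i) := by rw [hc i]
      _ = _ := by ring
end PiLoc

section Equiv
variable {F A : Type*} [Field F] [CommRing A] [Algebra F A]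

/-- evaluation of derivations at a point, as a linear map -/
def evalDer (x : A) : Derivation F A A →ₗ[A] A where
  toFun d := d x
  map_add' d1 d2 := rfl
  map_smul' r d := rfl

lemma derivation_sum_apply {ι : Type*} (s : Finset ι) (f : ι → Derivation F A A) (x : A) :
    (∑ i ∈ s, f i) x = ∑ i ∈ s, f i x :=
  map_sum (evalDer x) f s

/-- dual systems of derivations give a trivialization of the module of derivations. -/
noncomputable def derEquivFun {n : ℕ} (D : Fin n → Derivation F A A) (a : Fin n → A)
    (hD : ∀ i j, D i (a j) = if i = j then 1 else 0)
    (huniq : ∀ d : Derivation F A A, (∀ i, d (a i) = 0) → d = 0) :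
    Derivation F A A ≃ₗ[A] (Fin n → A) where
  toFun δ := fun i => δ (a i)
  map_add' δ1 δ2 := funext fun i => by simp [Derivation.add_apply]
  map_smul' r δ := funext fun i => by simp [Derivation.smul_apply]
  invFun c := ∑ i, c i • D i
  right_inv c := by
    funext i
    show (∑ j, c j • D j) (a i) = c i
    rw [derivation_sum_apply]
    have hterm : ∀ j, (c j • D j) (a i) = if j = i then c j else 0 := by
      intro j
      rw [Derivation.smul_apply, hD j i]
      by_cases hji : j = i <;> simp [hji]
    simp_rw [hterm]
    simp
  left_inv δ := by
    have h0 : ∀ i, ((∑ j, δ (a j) • D j) - δ) (a i) = 0 := by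
      intro i
      rw [Derivation.sub_apply, derivation_sum_apply]
      have hterm : ∀ j, (δ (a j) • D j) (a i) = if j = i then δ (a j) else 0 := by
        intro j
        rw [Derivation.smul_apply, hD j i]
        by_cases hji : j = i <;> simp [hji]
      simp_rw [hterm]
      simp
    have h1 := huniq _ h0
    show (∑ j, δ (a j) • D j) = δ
    rwa [sub_eq_zero] at h1

end Equiv

section Main
variable {F R : Type*} [Field F] [CharZero F] [CommRing R] [Algebra F R] {n : ℕ}

/-- uniqueness of local derivations relative to the dual system -/
lemma loc_uniq
    (hNoeth : IsNoetherianRing R) (hReg : IsRegularRing' R)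
    (hEquidim : ∀ (m : Ideal R) (_ : m.IsMaximal),
      ringKrullDim (Localization.AtPrime m) = n)
    (hRes : ∀ (m : Ideal R) (_ : m.IsMaximal), Algebra.IsAlgebraic F (R ⧸ m))
    (D : Fin n → Derivation F R R) (a : Fin n → R)
    (h : ∀ i j, D i (a j) = if i = j then 1 else 0)
    (m : Ideal R) (hm : m.IsMaximal) :
    ∀ δ' : Derivation F (Localization.AtPrime m) (Localization.AtPrime m),
      (∀ i, δ' (algebraMap R (Localization.AtPrime m) (a i)) = 0) → δ' = 0 := by
  haveI := hm
  haveI : IsNoetherianRing (Localization.AtPrime m) :=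
    IsLocalization.isNoetherianRing m.primeCompl _ hNoeth
  have hfin : Module.finrank (IsLocalRing.ResidueField (Localization.AtPrime m))
      (IsLocalRing.CotangentSpace (Localization.AtPrime m)) = n := by
    obtain ⟨-, heq⟩ := hReg m hm.isPrime
    have h2 := hEquidim m hm
    rw [heq] at h2
    exact_mod_cast h2
  intro δ' hδ'
  refine core_local (aux_loc_hAR m (hRes m hm)) hfin
    (fun i => extDer m.primeCompl _ (D i))
    (fun j => algebraMap R (Localization.AtPrime m) (a j)) ?_ δ' hδ'
  intro i j
  rw [extDer_algebraMap, h i j]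
  by_cases hij : i = j <;> simp [hij]


/-- global uniqueness -/
lemma glob_uniq
    (hNoeth : IsNoetherianRing R) (hReg : IsRegularRing' R)
    (hEquidim : ∀ (m : Ideal R) (_ : m.IsMaximal),
      ringKrullDim (Localization.AtPrime m) = n)
    (hRes : ∀ (m : Ideal R) (_ : m.IsMaximal), Algebra.IsAlgebraic F (R ⧸ m))
    (D : Fin n → Derivation F R R) (a : Fin n → R)
    (h : ∀ i j, D i (a j) = if i = j then 1 else 0) :
    ∀ δ : Derivation F R R, (∀ i, δ (a i) = 0) → δ = 0 := by
  intro δ hδ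
  ext r
  show δ r = 0
  by_contra hr
  set I : Ideal R := LinearMap.ker (LinearMap.toSpanSingleton R R (δ r)) with hI
  have hItop : I ≠ ⊤ := by
    intro hcon
    have h1 : (1 : R) ∈ I := hcon ▸ Submodule.mem_top
    rw [hI, LinearMap.mem_ker, LinearMap.toSpanSingleton_apply, one_smul] at h1
    exact hr h1
  obtain ⟨m, hm, hIm⟩ := Ideal.exists_le_maximal I hItop
  haveI := hm
  set δ' := extDer m.primeCompl (Localization.AtPrime m) δ with hδ'def
  have hδ'a : ∀ i, δ' (algebraMap R (Localization.AtPrime m) (a i)) = 0 := by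
    intro i
    rw [hδ'def, extDer_algebraMap, hδ i, map_zero]
  have hδ'0 : δ' = 0 := loc_uniq hNoeth hReg hEquidim hRes D a h m hm δ' hδ'a
  have h0 : algebraMap R (Localization.AtPrime m) (δ r) = 0 := by
    rw [← extDer_algebraMap m.primeCompl (Localization.AtPrime m) δ r, ← hδ'def, hδ'0]
    rfl
  obtain ⟨c, hc⟩ := (IsLocalization.map_eq_zero_iff m.primeCompl _ _).mp h0
  have hcI : (c : R) ∈ I := by
    rw [hI, LinearMap.mem_ker, LinearMap.toSpanSingleton_apply, smul_eq_mul]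
    exact hc
  exact c.2 (hIm hcI)

end Main

/-- Let `R` be a commutative Noetherian regular ring containing a field `F` of characteristic
`0`, equidimensional of dimension `n`, all of whose residue fields at maximal ideals are
algebraic over `F`.  If there are `F`-linear derivations `∂₁, …, ∂_n` of `R` and elements
`a₁, …, a_n ∈ R` with `∂ᵢ(aⱼ) = δᵢⱼ`, then `R` satisfies Hypothesis H over `F`:  `Der_F(R)` is
a finitely generated projective `R`-module of rank `n`, and for every maximal ideal the
canonical map `R_m ⊗_R Der_F(R) → Der_F(R_m)` is an isomorphism. -/
theorem hypothesisH_of_exists_dual_derivations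
    {F R : Type*} [Field F] [CharZero F] [CommRing R] [Algebra F R] {n : ℕ}
    (hNoeth : IsNoetherianRing R) (hReg : IsRegularRing' R)
    (hEquidim : ∀ (m : Ideal R) (_ : m.IsMaximal),
      ringKrullDim (Localization.AtPrime m) = n)
    (hRes : ∀ (m : Ideal R) (_ : m.IsMaximal), Algebra.IsAlgebraic F (R ⧸ m))
    (D : Fin n → Derivation F R R) (a : Fin n → R)
    (h : ∀ i j, D i (a j) = if i = j then 1 else 0) :
    HypothesisH F R n := by
  have huniqR := glob_uniq hNoeth hReg hEquidim hRes D a h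
  let e : Derivation F R R ≃ₗ[R] (Fin n → R) := derEquivFun D a h huniqR
  haveI hFin : Module.Finite R (Derivation F R R) := Module.Finite.equiv e.symm
  haveI hFree : Module.Free R (Derivation F R R) := Module.Free.of_equiv e.symm
  -- local data for each maximal ideal
  have locData : ∀ (m : Ideal R) (hm : m.IsMaximal),
      ∃ g : Derivation F R R →ₗ[R]
          Derivation F (Localization.AtPrime m) (Localization.AtPrime m),
        (∀ (δ : Derivation F R R) (r : R),
            g δ (algebraMap R (Localization.AtPrime m) r)
              = algebraMap R (Localization.AtPrime m) (δ r)) ∧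
          IsLocalizedModule m.primeCompl g ∧
          (Module.Free (Localization.AtPrime m)
            (LocalizedModule m.primeCompl (Derivation F R R)) ∧
          Module.finrank (Localization.AtPrime m)
            (LocalizedModule m.primeCompl (Derivation F R R)) = n) := by
    intro m hm
    haveI := hm
    set A := Localization.AtPrime m with hA
    set D' : Fin n → Derivation F A A := fun i => extDer m.primeCompl A (D i) with hD'def
    set a' : Fin n → A := fun j => algebraMap R A (a j) with ha'def
    have hD' : ∀ i j, D' i (a' j) = if i = j then 1 else 0 := by
      intro i j
      rw [hD'def, ha'def]
      show extDer m.primeCompl A (D i) (algebraMap R A (a j)) = _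
      rw [extDer_algebraMap, h i j]
      by_cases hij : i = j <;> simp [hij]
    have huniqA := loc_uniq hNoeth hReg hEquidim hRes D a h m hm
    let eA : Derivation F A A ≃ₗ[A] (Fin n → A) := derEquivFun D' a' hD' huniqA
    let eAr : (Fin n → A) ≃ₗ[R] Derivation F A A := (eA.restrictScalars R).symm
    let g : Derivation F R R →ₗ[R] Derivation F A A :=
      eAr.toLinearMap ∘ₗ ((piLocMap A n) ∘ₗ e.toLinearMap)
    haveI hpl : IsLocalizedModule m.primeCompl (piLocMap A n) :=
      isLocalizedModule_piLocMap m.primeCompl A n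
    haveI hg : IsLocalizedModule m.primeCompl g := by
      haveI h1 : IsLocalizedModule m.primeCompl ((piLocMap A n) ∘ₗ e.toLinearMap) := by
        have := IsLocalizedModule.of_linearEquiv_right (S := m.primeCompl)
          (f := piLocMap A n) (e := e)
        exact this
      exact IsLocalizedModule.of_linearEquiv (S := m.primeCompl)
        (f := (piLocMap A n) ∘ₗ e.toLinearMap) (e := eAr)
    refine ⟨g, ?_, hg, ?_⟩
    · -- compatibility
      intro δ r
      -- representation of δ
      have hrep : (∑ i, δ (a i) • D i) = δ := e.symm_apply_apply δ
      have hδr : δ r = ∑ i, δ (a i) * D i r := by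
        conv_lhs => rw [← hrep]
        rw [derivation_sum_apply]
        simp [Derivation.smul_apply, smul_eq_mul]
      have hgδ : g δ = ∑ i, (algebraMap R A (δ (a i))) • D' i := by
        show eAr (piLocMap A n (e δ)) = _
        rfl
      rw [hgδ, derivation_sum_apply]
      have hterm : ∀ i, ((algebraMap R A (δ (a i))) • D' i) (algebraMap R A r)
          = algebraMap R A (δ (a i) * D i r) := by
        intro i
        rw [Derivation.smul_apply, hD'def]
        show algebraMap R A (δ (a i)) • extDer m.primeCompl A (D i) (algebraMap R A r) = _
        rw [extDer_algebraMap, smul_eq_mul, ← map_mul]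
      rw [hδr, map_sum]
      exact Finset.sum_congr rfl (fun i _ => hterm i)
    · -- freeness of the localized module
      let iso : LocalizedModule m.primeCompl (Derivation F R R) ≃ₗ[R] Derivation F A A :=
        IsLocalizedModule.iso m.primeCompl g
      let f1 : LocalizedModule m.primeCompl (Derivation F R R) →ₗ[A] (Fin n → A) :=
        LinearMap.extendScalarsOfIsLocalization m.primeCompl A
          (((eA.restrictScalars R).toLinearMap) ∘ₗ iso.toLinearMap)
      let f2 : (Fin n → A) →ₗ[A] LocalizedModule m.primeCompl (Derivation F R R) :=
        LinearMap.extendScalarsOfIsLocalization m.primeCompl A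
          (iso.symm.toLinearMap ∘ₗ ((eA.restrictScalars R).symm.toLinearMap))
      let eqv : LocalizedModule m.primeCompl (Derivation F R R) ≃ₗ[A] (Fin n → A) :=
        LinearEquiv.ofLinear f1 f2 (by ext v; simp [f1, f2]) (by ext w; simp [f1, f2])
      constructor
      · exact Module.Free.of_equiv eqv.symm
      · rw [eqv.finrank_eq]
        simp [Module.finrank_pi]
  refine ⟨inferInstance, hNoeth, hReg, hEquidim, hRes, hFin, inferInstance, ?_, ?_⟩
  · intro m hm
    obtain ⟨g, hcomp, hloc, hfree⟩ := locData m hm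
    exact hfree
  · intro m hm
    obtain ⟨g, hcomp, hloc, hfree⟩ := locData m hm
    exact ⟨g, hcomp, hloc⟩
end

section
/- Let R be a ring satisfying Hypothesis H over a field F of characteristic 0. For θ in the ring End_F(R) of F-linear endomorphisms of R and j ≥ 0, say that θ is a differential operator of order ≤ j if for all r₀, r₁, …, r_j ∈ R the iterated commutator [⋯[[θ, r₀], r₁]⋯, r_j] is zero, where r denotes the multiplication-by-r operator and [θ, r] = θ∘r − r∘θ. Then the set D(R, F) of all F-linear endomorphisms of R that are differential operators of some finite order equals the F-subalgebra D of End_F(R) generated by the multiplication operators by elements of R together with the F-linear derivations of R. -/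
/-- `θ : End_F(R)` is a differential operator of order at most `j` if all iterated commutators
`[⋯[[θ, r₀], r₁]⋯, r_j]` with `j + 1` multiplication operators vanish. -/
def IsDiffOpOfOrderLE (F R : Type*) [Field F] [CommRing R] [Algebra F R] :
    ℕ → Module.End F R → Prop
  | 0, θ => ∀ r : R, θ * LinearMap.mulLeft F r - LinearMap.mulLeft F r * θ = 0
  | (j + 1), θ => ∀ r : R,
      IsDiffOpOfOrderLE F R j (θ * LinearMap.mulLeft F r - LinearMap.mulLeft F r * θ)


set_option linter.unusedSectionVars false

section DiffOpAux

variable {F : Type*} {R : Type*} [Field F] [CommRing R] [Algebra F R]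

/-- multiplication operator -/
abbrev Mc (F : Type*) {R : Type*} [Field F] [CommRing R] [Algebra F R] (r : R) :
    Module.End F R := LinearMap.mulLeft F r

/-- commutator with a multiplication operator -/
def brkt (θ : Module.End F R) (r : R) : Module.End F R := θ * Mc F r - Mc F r * θ

lemma Mc_comm (r s : R) : Mc F r * Mc F s = Mc F s * Mc F r := by
  ext x; simp [Module.End.mul_apply, mul_left_comm]

@[simp] lemma Mc_apply (r x : R) : Mc F r x = r * x := rfl

lemma brkt_add (x y : Module.End F R) (r : R) :
    brkt (x + y) r = brkt x r + brkt y r := by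
  simp only [brkt]; noncomm_ring

lemma brkt_smul (c : F) (x : Module.End F R) (r : R) :
    brkt (c • x) r = c • brkt x r := by
  simp only [brkt, smul_sub, smul_mul_assoc, mul_smul_comm]

lemma brkt_zero (r : R) : brkt (0 : Module.End F R) r = 0 := by
  simp [brkt]

lemma brkt_sub (x y : Module.End F R) (r : R) :
    brkt (x - y) r = brkt x r - brkt y r := by
  simp only [brkt]; simp only [sub_mul, mul_sub, mul_assoc]; abel

lemma brkt_mul (x y : Module.End F R) (r : R) :
    brkt (x * y) r = x * brkt y r + brkt x r * y := by
  simp only [brkt]; simp only [sub_mul, mul_sub, mul_assoc]; abel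

lemma brkt_Mc (s r : R) : brkt (Mc F s) r = 0 := by
  simp [brkt, Mc_comm]

lemma brkt_mul_Mc (x : Module.End F R) (a r : R) :
    brkt (x * Mc F a) r = brkt x r * Mc F a := by
  ext y
  simp only [brkt, LinearMap.sub_apply, Module.End.mul_apply, Mc_apply, mul_left_comm]

lemma brkt_Mc_mul (x : Module.End F R) (a r : R) :
    brkt (Mc F a * x) r = Mc F a * brkt x r := by
  ext y
  simp only [brkt, LinearMap.sub_apply, Module.End.mul_apply, Mc_apply, map_sub,
    mul_sub, mul_left_comm]

lemma brkt_swap (x : Module.End F R) (a b : R) :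
    brkt (brkt x a) b = brkt (brkt x b) a := by
  ext y
  simp only [brkt, LinearMap.sub_apply, Module.End.mul_apply, Mc_apply, map_sub,
    mul_sub, mul_left_comm]
  ring

lemma brkt_der (δ : Derivation F R R) (r : R) :
    brkt (δ : R →ₗ[F] R) r = Mc F (δ r) := by
  ext x
  simp only [brkt, LinearMap.sub_apply, Module.End.mul_apply, Mc_apply,
    Derivation.coeFn_coe, Derivation.leibniz, smul_eq_mul]
  ring

lemma brkt_radd (θ : Module.End F R) (a b : R) :
    brkt θ (a + b) = brkt θ a + brkt θ b := by
  have : Mc F (a + b) = Mc F a + Mc F b := by ext x; simp [add_mul]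
  simp only [brkt, this]; noncomm_ring

lemma brkt_rsmul (θ : Module.End F R) (c : F) (a : R) :
    brkt θ (c • a) = c • brkt θ a := by
  have : Mc F (c • a) = c • Mc F a := by ext x; simp [smul_mul_assoc]
  simp only [brkt, this, smul_sub, smul_mul_assoc, mul_smul_comm]

lemma brkt_leibniz (θ : Module.End F R) (a b : R) :
    brkt θ (a * b) = brkt θ a * Mc F b + Mc F a * brkt θ b := by
  have : Mc F (a * b) = Mc F a * Mc F b := by ext y; simp [Module.End.mul_apply, mul_assoc]
  simp only [brkt, this]; simp only [sub_mul, mul_sub, mul_assoc]; abel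

/-- iterated commutator along a list -/
def itb (θ : Module.End F R) (l : List R) : Module.End F R := l.foldl brkt θ

@[simp] lemma itb_nil (θ : Module.End F R) : itb θ [] = θ := rfl

@[simp] lemma itb_cons (θ : Module.End F R) (r : R) (l : List R) :
    itb θ (r :: l) = itb (brkt θ r) l := rfl

lemma itb_add (x y : Module.End F R) (l : List R) :
    itb (x + y) l = itb x l + itb y l := by
  induction l generalizing x y with
  | nil => rfl
  | cons r t ih => simp [brkt_add, ih]

lemma itb_smul (c : F) (x : Module.End F R) (l : List R) :
    itb (c • x) l = c • itb x l := by
  induction l generalizing x with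
  | nil => rfl
  | cons r t ih => simp [brkt_smul, ih]

lemma itb_zero (l : List R) : itb (0 : Module.End F R) l = 0 := by
  induction l with
  | nil => rfl
  | cons r t ih => simp [brkt_zero, ih]

lemma itb_sub (x y : Module.End F R) (l : List R) :
    itb (x - y) l = itb x l - itb y l := by
  induction l generalizing x y with
  | nil => rfl
  | cons r t ih => simp [brkt_sub, ih]

lemma itb_sum {ι : Type*} (s : Finset ι) (A : ι → Module.End F R) (l : List R) :
    itb (∑ i ∈ s, A i) l = ∑ i ∈ s, itb (A i) l := by
  classical
  induction s using Finset.induction_on with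
  | empty => simp [itb_zero]
  | insert _ _ hni ih => rw [Finset.sum_insert hni, Finset.sum_insert hni, itb_add, ih]

lemma itb_mul_Mc (x : Module.End F R) (a : R) (l : List R) :
    itb (x * Mc F a) l = itb x l * Mc F a := by
  induction l generalizing x with
  | nil => rfl
  | cons r t ih => simp [brkt_mul_Mc, ih]

lemma itb_Mc_mul (x : Module.End F R) (a : R) (l : List R) :
    itb (Mc F a * x) l = Mc F a * itb x l := by
  induction l generalizing x with
  | nil => rfl
  | cons r t ih => simp [brkt_Mc_mul, ih]

lemma itb_perm {l l' : List R} (h : l.Perm l') (θ : Module.End F R) :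
    itb θ l = itb θ l' := by
  induction h generalizing θ with
  | nil => rfl
  | cons x _ ih => simp [ih]
  | swap x y t => simp [brkt_swap]
  | trans _ _ ih₁ ih₂ => rw [ih₁, ih₂]

end DiffOpAux


section Pord

variable {F : Type*} {R : Type*} [Field F] [CommRing R] [Algebra F R]

local notation "P" => IsDiffOpOfOrderLE F R

lemma Pz {θ : Module.End F R} (h : P 0 θ) (r : R) : brkt θ r = 0 := h r

lemma Pz' {θ : Module.End F R} (h : ∀ r : R, brkt θ r = 0) : P 0 θ := h

lemma Ps {j : ℕ} {θ : Module.End F R} (h : P (j+1) θ) (r : R) : P j (brkt θ r) := h r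

lemma Ps' {j : ℕ} {θ : Module.End F R} (h : ∀ r : R, P j (brkt θ r)) : P (j+1) θ := h

lemma P0_apply {θ : Module.End F R} (h : P 0 θ) (x : R) : θ x = x * θ 1 := by
  have := congrArg (fun A : Module.End F R => A 1) (Pz h x)
  simpa [brkt, LinearMap.sub_apply, Module.End.mul_apply, sub_eq_zero] using this

lemma P0_eq {θ : Module.End F R} (h : P 0 θ) : θ = Mc F (θ 1) := by
  ext x; rw [P0_apply h x]; simp [mul_comm]

lemma P0_eq_zero {θ : Module.End F R} (h : P 0 θ) (h1 : θ 1 = 0) : θ = 0 := by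
  rw [P0_eq h, h1]; ext x; simp

lemma P_op_zero : ∀ j, P j (0 : Module.End F R)
  | 0 => Pz' fun r => brkt_zero r
  | (j+1) => Ps' fun r => by rw [brkt_zero]; exact P_op_zero j

lemma P_add : ∀ {j} {x y : Module.End F R}, P j x → P j y → P j (x + y)
  | 0, x, y, hx, hy => Pz' fun r => by rw [brkt_add, Pz hx r, Pz hy r, add_zero]
  | (j+1), x, y, hx, hy => Ps' fun r => by rw [brkt_add]; exact P_add (Ps hx r) (Ps hy r)

lemma P_smul : ∀ {j} (c : F) {x : Module.End F R}, P j x → P j (c • x)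
  | 0, c, x, hx => Pz' fun r => by rw [brkt_smul, Pz hx r, smul_zero]
  | (j+1), c, x, hx => Ps' fun r => by rw [brkt_smul]; exact P_smul c (Ps hx r)

lemma P_sub {j} {x y : Module.End F R} (hx : P j x) (hy : P j y) : P j (x - y) := by
  have : x - y = x + (-1 : F) • y := by ext z; simp [sub_eq_add_neg]
  rw [this]; exact P_add hx (P_smul _ hy)

lemma P_mono : ∀ {j} {x : Module.End F R}, P j x → P (j+1) x
  | 0, x, hx => Ps' fun r => by rw [Pz hx r]; exact P_op_zero 0
  | (j+1), x, hx => Ps' fun r => P_mono (Ps hx r)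

lemma P_le {j k} (h : j ≤ k) {x : Module.End F R} (hx : P j x) : P k x := by
  induction k with
  | zero => exact Nat.le_zero.mp h ▸ hx
  | succ k ih =>
      rcases Nat.lt_or_ge j (k+1) with h' | h'
      · exact P_mono (ih (Nat.lt_succ_iff.mp h'))
      · exact (Nat.le_antisymm h h') ▸ hx

lemma P_Mc (r : R) : P 0 (Mc F r) := Pz' fun s => brkt_Mc r s

lemma P_der (δ : Derivation F R R) : P 1 ((δ : R →ₗ[F] R) : Module.End F R) :=
  Ps' fun r => by rw [brkt_der]; exact P_Mc _

lemma P_mul : ∀ n {j k} {x y : Module.End F R}, j + k ≤ n → P j x → P k y → P (j + k) (x * y) := by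
  intro n
  induction n with
  | zero =>
      intro j k x y hn hx hy
      obtain ⟨hj, hk⟩ : j = 0 ∧ k = 0 := by omega
      subst hj; subst hk
      exact Pz' fun r => by rw [brkt_mul, Pz hy r, Pz hx r, mul_zero, zero_mul, add_zero]
  | succ n ih =>
      intro j k x y hn hx hy
      rcases Nat.eq_zero_or_pos (j + k) with h0 | hpos
      · obtain ⟨hj, hk⟩ : j = 0 ∧ k = 0 := by omega
        subst hj; subst hk
        exact ih (by omega) hx hy
      · obtain ⟨m, hm⟩ : ∃ m, j + k = m + 1 := ⟨j + k - 1, by omega⟩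
        rw [hm]
        refine Ps' fun r => ?_
        rw [brkt_mul]
        have h1 : P m (x * brkt y r) := by
          rcases Nat.eq_zero_or_pos k with hk0 | hkpos
          · subst hk0
            rw [Pz hy r, mul_zero]; exact P_op_zero m
          · obtain ⟨k', rfl⟩ : ∃ k', k = k' + 1 := ⟨k - 1, by omega⟩
            exact P_le (by omega) (ih (j := j) (k := k') (by omega) hx (Ps hy r))
        have h2 : P m (brkt x r * y) := by
          rcases Nat.eq_zero_or_pos j with hj0 | hjpos
          · subst hj0
            rw [Pz hx r, zero_mul]; exact P_op_zero m
          · obtain ⟨j', rfl⟩ : ∃ j', j = j' + 1 := ⟨j - 1, by omega⟩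
            exact P_le (by omega) (ih (j := j') (k := k) (by omega) (Ps hx r) hy)
        exact P_add h1 h2

lemma P_itb : ∀ (l : List R) {k : ℕ} {θ : Module.End F R},
    P (k + l.length) θ → P k (itb θ l)
  | [], k, θ, h => by simpa using h
  | (r :: t), k, θ, h => by
      rw [itb_cons]
      apply P_itb t
      have e : k + (r :: t).length = (k + t.length) + 1 := by simp; omega
      exact Ps (e ▸ h) r

lemma P_list : ∀ {j : ℕ} {θ : Module.End F R},
    P j θ ↔ ∀ l : List R, l.length = j + 1 → itb θ l = 0 := by
  intro j
  induction j with
  | zero =>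
      intro θ
      constructor
      · intro h l hl
        match l, hl with
        | [r], _ => simpa using Pz h r
      · intro h
        exact Pz' fun r => by simpa using h [r] rfl
  | succ j ih =>
      intro θ
      constructor
      · intro h l hl
        match l, hl with
        | (r :: t), hl =>
            rw [itb_cons]
            exact (ih (θ := brkt θ r)).mp (Ps h r) t (by simpa using hl)
      · intro h
        refine Ps' fun r => (ih (θ := brkt θ r)).mpr fun t ht => ?_
        simpa using h (r :: t) (by simpa using ht)

end Pord

section Comb

variable {F : Type*} {R : Type*} [Field F] [CommRing R] [Algebra F R]

local notation "P" => IsDiffOpOfOrderLE F R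

lemma ofFn_cons {m : ℕ} (x : R) (g : Fin m → R) :
    List.ofFn (Fin.cons x g) = x :: List.ofFn g := by
  rw [List.ofFn_succ]
  simp

lemma removeNth_succ_eq {m : ℕ} (i : Fin (m+1)) (w : Fin (m+2) → R) :
    Fin.removeNth i.succ w = Fin.cons (w 0) (Fin.removeNth i (Fin.tail w)) := by
  funext k
  refine Fin.cases ?_ (fun k' => ?_) k
  · simp [Fin.removeNth]
  · simp [Fin.removeNth, Fin.tail, Fin.succ_succAbove_succ]

lemma perm_ofFn_removeNth : ∀ {m : ℕ} (w : Fin (m+1) → R) (i : Fin (m+1)),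
    (List.ofFn w).Perm (w i :: List.ofFn (Fin.removeNth i w)) := by
  intro m
  induction m with
  | zero =>
      intro w i
      have h0 : i = 0 := Fin.fin_one_eq_zero i
      subst h0
      have h1 : List.ofFn w = [w 0] := by simp [List.ofFn_succ]
      have h2 : List.ofFn (Fin.removeNth 0 w) = ([] : List R) := by simp
      rw [h1, h2]
  | succ m ih =>
      intro w i
      refine Fin.cases ?_ (fun i' => ?_) i
      · simp [List.ofFn_succ, Fin.removeNth_zero, Fin.tail]
      · have h1 : List.ofFn w = w 0 :: List.ofFn (Fin.tail w) := by
          rw [List.ofFn_succ]; rfl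
        have h2 := (ih (Fin.tail w) i').cons (w 0)
        have h3 := List.Perm.swap (Fin.tail w i') (w 0)
          (List.ofFn (Fin.removeNth i' (Fin.tail w)))
        have h4 : w i'.succ :: List.ofFn (Fin.removeNth i'.succ w)
            = Fin.tail w i' :: w 0 :: List.ofFn (Fin.removeNth i' (Fin.tail w)) := by
          rw [removeNth_succ_eq, ofFn_cons]; rfl
        rw [h1, h4]
        exact h2.trans h3

lemma ofFn_perm_of_comp_perm {m : ℕ} (v : Fin m → R) (ρ : Equiv.Perm (Fin m)) :
    (List.ofFn (v ∘ ρ)).Perm (List.ofFn v) := by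
  have h1 : List.ofFn (v ∘ ρ) = (List.ofFn (ρ : Fin m → Fin m)).map v := by
    rw [List.map_ofFn]
  have h2 : List.ofFn v = (List.finRange m).map v := List.ofFn_eq_map
  rw [h1, h2]
  refine List.Perm.map v ?_
  refine List.perm_of_nodup_nodup_toFinset_eq ?_ ?_ ?_
  · exact List.nodup_ofFn.mpr ρ.injective
  · exact List.nodup_finRange m
  · ext x
    simp [List.mem_toFinset, List.mem_ofFn, ρ.surjective x]

lemma itb_comp_perm {m : ℕ} (θ : Module.End F R) (v : Fin m → R) (ρ : Equiv.Perm (Fin m)) :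
    itb θ (List.ofFn (v ∘ ρ)) = itb θ (List.ofFn v) :=
  itb_perm (ofFn_perm_of_comp_perm v ρ) θ

lemma removeNth_update {m : ℕ} (i : Fin (m+1)) (v : Fin (m+1) → R) (x : R) :
    Fin.removeNth i (Function.update v i x) = Fin.removeNth i v := by
  funext k
  simp [Fin.removeNth, Function.update_of_ne (Fin.succAbove_ne i k)]

/-- key reduction: the symbol at an updated tuple -/
lemma itb_update {m : ℕ} (θ : Module.End F R) (v : Fin (m+1) → R) (i : Fin (m+1)) (x : R) :
    itb θ (List.ofFn (Function.update v i x))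
      = itb (brkt θ x) (List.ofFn (Fin.removeNth i v)) := by
  have h := perm_ofFn_removeNth (Function.update v i x) i
  rw [Function.update_self, removeNth_update] at h
  rw [itb_perm h θ, itb_cons]

end Comb

section Core

variable {F : Type*} {R : Type*} [Field F] [CommRing R] [Algebra F R]

local notation "P" => IsDiffOpOfOrderLE F R

/-- multi-derivation predicate -/
def MD (F : Type*) {R : Type*} [Field F] [CommRing R] [Algebra F R]
    (j : ℕ) (φ : (Fin j → R) → R) : Prop :=
  ∀ (i : Fin j) (v : Fin j → R),
    (∀ a b, φ (Function.update v i (a + b))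
        = φ (Function.update v i a) + φ (Function.update v i b)) ∧
    (∀ (c : F) (a : R), φ (Function.update v i (c • a)) = c • φ (Function.update v i a)) ∧
    (∀ a b, φ (Function.update v i (a * b))
        = a * φ (Function.update v i b) + b * φ (Function.update v i a))

lemma P_sum {ι : Type*} (s : Finset ι) {j : ℕ} {A : ι → Module.End F R}
    (h : ∀ i ∈ s, P j (A i)) : P j (∑ i ∈ s, A i) := by
  classical
  induction s using Finset.induction_on with
  | empty => simpa using P_op_zero j
  | insert _ _ hni ih =>
      rw [Finset.sum_insert hni]
      exact P_add (h _ (Finset.mem_insert_self _ _))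
        (ih fun i hi => h i (Finset.mem_insert_of_mem hi))

lemma symbol_MD {m : ℕ} {θ : Module.End F R} (hθ : P (m+1) θ) :
    MD F (m+1) (fun v => itb θ (List.ofFn v) 1) := by
  intro i v
  have key : ∀ x : R, itb θ (List.ofFn (Function.update v i x)) 1
      = itb (brkt θ x) (List.ofFn (Fin.removeNth i v)) 1 := fun x => by rw [itb_update]
  refine ⟨fun a b => ?_, fun c a => ?_, fun a b => ?_⟩
  · dsimp only
    rw [key, key, key, brkt_radd, itb_add]; simp
  · dsimp only
    rw [key, key, brkt_rsmul, itb_smul]; simp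
  · dsimp only
    rw [key, key, key, brkt_leibniz, itb_add, itb_mul_Mc, itb_Mc_mul]
    have h0 : P 0 (itb (brkt θ a) (List.ofFn (Fin.removeNth i v))) := by
      apply P_itb
      have : (0 : ℕ) + (List.ofFn (Fin.removeNth i v)).length = m := by simp
      rw [this]
      exact Ps hθ a
    rw [LinearMap.add_apply, Module.End.mul_apply, Module.End.mul_apply, Mc_apply, Mc_apply,
      mul_one, P0_apply h0 b]
    ring

lemma brk_sigma : ∀ (m : ℕ) (Θ : Module.End F R), P m Θ →
    ∀ (δ : Derivation F R R) (v : Fin (m+1) → R),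
    itb (Θ * ((δ : R →ₗ[F] R) : Module.End F R)) (List.ofFn v) 1
      = ∑ k : Fin (m+1), δ (v k) * itb Θ (List.ofFn (Fin.removeNth k v)) 1 := by
  intro m
  induction m with
  | zero =>
      intro Θ hΘ δ v
      have h1 : List.ofFn v = [v 0] := by simp [List.ofFn_succ]
      rw [h1, itb_cons, itb_nil, brkt_mul, brkt_der]
      rw [LinearMap.add_apply, Module.End.mul_apply, Module.End.mul_apply, Mc_apply, mul_one,
        P0_apply hΘ (δ (v 0))]
      have h2 : ((δ : R →ₗ[F] R) : Module.End F R) 1 = 0 := by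
        simp [Derivation.coeFn_coe]
      rw [h2, map_zero, add_zero]
      rw [Fin.sum_univ_one]
      have h3 : List.ofFn (Fin.removeNth 0 v) = ([] : List R) := by simp
      rw [h3, itb_nil]
  | succ m ih =>
      intro Θ hΘ δ v
      have h1 : List.ofFn v = v 0 :: List.ofFn (Fin.tail v) := by
        rw [List.ofFn_succ]; rfl
      rw [h1, itb_cons, brkt_mul, brkt_der, itb_add, LinearMap.add_apply]
      have hT1 : itb (Θ * Mc F (δ (v 0))) (List.ofFn (Fin.tail v)) 1
          = δ (v 0) * itb Θ (List.ofFn (Fin.tail v)) 1 := by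
        rw [itb_mul_Mc, Module.End.mul_apply, Mc_apply, mul_one]
        have h0 : P 0 (itb Θ (List.ofFn (Fin.tail v))) := by
          apply P_itb
          have : (0 : ℕ) + (List.ofFn (Fin.tail v)).length = m + 1 := by simp
          rw [this]; exact hΘ
        rw [P0_apply h0]
      have hT2 := ih (brkt Θ (v 0)) (Ps hΘ (v 0)) δ (Fin.tail v)
      rw [hT1, hT2]
      conv_rhs => rw [Fin.sum_univ_succ]
      rw [Fin.removeNth_zero]
      congr 1
      refine Finset.sum_congr rfl fun k _ => ?_
      have h5 : List.ofFn (Fin.removeNth k.succ v)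
          = v 0 :: List.ofFn (Fin.removeNth k (Fin.tail v)) := by
        rw [removeNth_succ_eq, ofFn_cons]
      rw [h5, itb_cons]
      rfl

lemma der_sum_apply {ι : Type*} (s : Finset ι) (D : ι → Derivation F R R) (a : R) :
    (∑ i ∈ s, D i) a = ∑ i ∈ s, D i a := by
  classical
  induction s using Finset.induction_on with
  | empty => simp
  | insert _ _ hni ih => rw [Finset.sum_insert hni, Finset.sum_insert hni, Derivation.add_apply, ih]

lemma exists_dual_basis (M : Type*) [AddCommGroup M] [Module R M]
    [Module.Finite R M] [Module.Projective R M] :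
    ∃ (N : ℕ) (g : Fin N → M) (f : Fin N → (M →ₗ[R] R)), ∀ x, ∑ i, f i x • g i = x := by
  obtain ⟨N, π, hπ⟩ := Module.Finite.exists_fin' R M
  obtain ⟨h, hh⟩ := Module.projective_lifting_property π LinearMap.id hπ
  set sing : Fin N → Fin N → R := fun i => Pi.single i 1 with hsing
  refine ⟨N, fun i => π (sing i), fun i => (LinearMap.proj i).comp h, fun x => ?_⟩
  have hx : π (h x) = x := by
    rw [← LinearMap.comp_apply, hh]; rfl
  have h6 : ∀ i : Fin N, h x i • sing i = Pi.single i (h x i) := fun i => by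
    rw [hsing]
    funext k
    by_cases hk : k = i
    · subst hk; simp
    · simp [Pi.single_eq_of_ne hk]
  calc ∑ i, ((LinearMap.proj i).comp h) x • π (sing i)
      = ∑ i, π (h x i • sing i) := by
        refine Finset.sum_congr rfl fun i _ => ?_
        rw [map_smul]; rfl
    _ = π (∑ i, h x i • sing i) := (map_sum π _ _).symm
    _ = π (h x) := by
        congr 1
        rw [Finset.sum_congr rfl fun i _ => h6 i, Finset.univ_sum_single]
    _ = x := hx

end Core

section Expand

variable {F : Type*} {R : Type*} [Field F] [CommRing R] [Algebra F R]

local notation "P" => IsDiffOpOfOrderLE F R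

/-- the generating set -/
abbrev genSet (F R : Type*) [Field F] [CommRing R] [Algebra F R] : Set (Module.End F R) :=
  (Set.range fun r : R => (LinearMap.mulLeft F r : Module.End F R)) ∪
    (Set.range fun δ : Derivation F R R => (δ : R →ₗ[F] R))

/-- the explicit permutation decomposition map -/
def pdec {j : ℕ} (p : Fin (j+1) × Equiv.Perm (Fin j)) : Equiv.Perm (Fin (j+1)) :=
  (finSuccEquiv' (0 : Fin (j+1))).trans ((Equiv.optionCongr p.2).trans (finSuccEquiv' p.1).symm)

lemma pdec_zero {j : ℕ} (p : Fin (j+1) × Equiv.Perm (Fin j)) : pdec p 0 = p.1 := by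
  simp [pdec, Equiv.trans_apply, finSuccEquiv'_at, finSuccEquiv'_symm_none]

lemma pdec_succ {j : ℕ} (p : Fin (j+1) × Equiv.Perm (Fin j)) (i : Fin j) :
    pdec p i.succ = p.1.succAbove (p.2 i) := by
  have h1 : (finSuccEquiv' (0 : Fin (j+1))) i.succ = some i := by
    rw [← Fin.zero_succAbove i, finSuccEquiv'_succAbove]
  simp [pdec, Equiv.trans_apply, h1, finSuccEquiv'_symm_some]

lemma pdec_bijective {j : ℕ} : Function.Bijective (pdec (j := j)) := by
  rw [Fintype.bijective_iff_injective_and_card]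
  constructor
  · rintro ⟨k, π⟩ ⟨k', π'⟩ h
    have h0 : k = k' := by
      have := congrArg (fun ρ : Equiv.Perm (Fin (j+1)) => ρ 0) h
      simpa [pdec_zero] using this
    subst h0
    have h1 : π = π' := by
      apply Equiv.ext
      intro i
      have := congrArg (fun ρ : Equiv.Perm (Fin (j+1)) => ρ i.succ) h
      simp only [pdec_succ] at this
      exact Fin.succAbove_right_injective this
    rw [h1]
  · rw [Fintype.card_prod, Fintype.card_perm, Fintype.card_perm, Fintype.card_fin,
      Fintype.card_fin, Nat.factorial_succ]

lemma expand [Module.Finite R (Derivation F R R)] [Module.Projective R (Derivation F R R)] :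
    ∀ (j : ℕ) (φ : (Fin j → R) → R), MD F j φ →
    ∃ Θ : Module.End F R, Θ ∈ Algebra.adjoin F (genSet F R) ∧ P j Θ ∧
      ∀ v : Fin j → R, itb Θ (List.ofFn v) 1 = ∑ ρ : Equiv.Perm (Fin j), φ (v ∘ ρ) := by
  intro j
  induction j with
  | zero =>
      intro φ hφ
      refine ⟨Mc F (φ finZeroElim),
        Algebra.subset_adjoin (Set.mem_union_left _ ⟨_, rfl⟩), P_Mc _, fun v => ?_⟩
      have h1 : List.ofFn v = ([] : List R) := by simp
      rw [h1, itb_nil, Mc_apply, mul_one]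
      have h2 : ∀ ρ : Equiv.Perm (Fin 0), φ (v ∘ ρ) = φ finZeroElim := fun ρ =>
        congrArg φ (funext fun x => x.elim0)
      rw [Finset.sum_congr rfl fun ρ _ => h2 ρ, Finset.sum_const, Finset.card_univ]
      simp
  | succ j ih =>
      intro φ hφ
      obtain ⟨N, g, f, hgf⟩ := exists_dual_basis (R := R) (Derivation F R R)
      -- slot-0 structure
      have hadd : ∀ (w : Fin j → R) (a b : R),
          φ (Fin.cons (a + b) w) = φ (Fin.cons a w) + φ (Fin.cons b w) := by
        intro w a b
        have h := (hφ 0 (Fin.cons 0 w)).1 a b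
        simpa [Fin.update_cons_zero] using h
      have hsmul : ∀ (w : Fin j → R) (c : F) (a : R),
          φ (Fin.cons (c • a) w) = c • φ (Fin.cons a w) := by
        intro w c a
        have h := (hφ 0 (Fin.cons 0 w)).2.1 c a
        simpa [Fin.update_cons_zero] using h
      have hmul : ∀ (w : Fin j → R) (a b : R),
          φ (Fin.cons (a * b) w) = a * φ (Fin.cons b w) + b * φ (Fin.cons a w) := by
        intro w a b
        have h := (hφ 0 (Fin.cons 0 w)).2.2 a b
        simpa [Fin.update_cons_zero] using h
      -- the derivation in slot 0
      let D : (Fin j → R) → Derivation F R R := fun w =>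
        Derivation.mk'
          { toFun := fun r => φ (Fin.cons r w)
            map_add' := hadd w
            map_smul' := fun c a => hsmul w c a }
          (fun a b => by simpa [smul_eq_mul] using hmul w a b)
      have hD_apply : ∀ (w : Fin j → R) (r : R), D w r = φ (Fin.cons r w) := fun w r => rfl
      let ψ : Fin N → (Fin j → R) → R := fun i w => f i (D w)
      have hφψ : ∀ (r : R) (w : Fin j → R), φ (Fin.cons r w) = ∑ i, ψ i w * g i r := by
        intro r w
        have h1 : φ (Fin.cons r w) = D w r := rfl
        rw [h1, ← hgf (D w), der_sum_apply]
        refine Finset.sum_congr rfl fun i _ => ?_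
        rw [Derivation.smul_apply, smul_eq_mul]
      -- update on cons-tail
      have hUC : ∀ (r x : R) (w : Fin j → R) (i : Fin j),
          (Fin.cons r (Function.update w i x) : Fin (j+1) → R)
            = Function.update (Fin.cons r w) i.succ x :=
        fun r x w i => by rw [Fin.cons_update]
      -- ψ's are multi-derivations
      have hψMD : ∀ i, MD F j (ψ i) := by
        intro i i' w
        refine ⟨fun a b => ?_, fun c a => ?_, fun a b => ?_⟩
        · have hD : D (Function.update w i' (a + b))
              = D (Function.update w i' a) + D (Function.update w i' b) := by
            ext r
            rw [Derivation.add_apply, hD_apply, hD_apply, hD_apply, hUC, hUC, hUC]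
            exact (hφ i'.succ (Fin.cons r w)).1 a b
          show f i (D _) = f i (D _) + f i (D _)
          rw [hD, map_add]
        · have hD : D (Function.update w i' (c • a))
              = algebraMap F R c • D (Function.update w i' a) := by
            ext r
            rw [Derivation.smul_apply, hD_apply, hD_apply, hUC, hUC]
            rw [(hφ i'.succ (Fin.cons r w)).2.1 c a, algebraMap_smul]
          show f i (D _) = c • f i (D _)
          rw [hD, map_smul, algebraMap_smul]
        · have hD : D (Function.update w i' (a * b))
              = a • D (Function.update w i' b) + b • D (Function.update w i' a) := by
            ext r
            rw [Derivation.add_apply, Derivation.smul_apply, Derivation.smul_apply,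
              hD_apply, hD_apply, hD_apply, hUC, hUC, hUC, smul_eq_mul, smul_eq_mul]
            exact (hφ i'.succ (Fin.cons r w)).2.2 a b
          show f i (D _) = a * f i (D _) + b * f i (D _)
          rw [hD, map_add, map_smul, map_smul, smul_eq_mul, smul_eq_mul]
      -- apply the induction hypothesis
      choose Θ hΘmem hΘP hΘσ using fun i => ih (ψ i) (hψMD i)
      refine ⟨∑ i, Θ i * ((g i : R →ₗ[F] R) : Module.End F R), ?_, ?_, ?_⟩
      · exact Subalgebra.sum_mem _ fun i _ => mul_mem (hΘmem i)
          (Algebra.subset_adjoin (Set.mem_union_right _ ⟨g i, rfl⟩))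
      · refine P_sum _ fun i _ => ?_
        have := P_mul (j + 1) (le_refl _) (hΘP i) (P_der (g i))
        exact this
      · intro v
        rw [itb_sum, LinearMap.sum_apply]
        have step1 : ∀ i : Fin N, itb (Θ i * ((g i : R →ₗ[F] R) : Module.End F R))
            (List.ofFn v) 1
            = ∑ k : Fin (j+1), g i (v k) * itb (Θ i) (List.ofFn (Fin.removeNth k v)) 1 :=
          fun i => brk_sigma j (Θ i) (hΘP i) (g i) v
        rw [Finset.sum_congr rfl fun i _ => step1 i]
        have step2 : ∀ (i : Fin N) (k : Fin (j+1)),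
            itb (Θ i) (List.ofFn (Fin.removeNth k v)) 1
              = ∑ π : Equiv.Perm (Fin j), ψ i ((Fin.removeNth k v) ∘ π) :=
          fun i k => hΘσ i (Fin.removeNth k v)
        rw [Finset.sum_congr rfl fun (i : Fin N) (_ : i ∈ Finset.univ) =>
          Finset.sum_congr rfl fun (k : Fin (j+1)) (_ : k ∈ Finset.univ) =>
            by rw [step2 i k]]
        -- now LHS = Σ_i Σ_k g i (v k) * Σ_π ψ i (...)
        rw [Finset.sum_comm]
        -- LHS = Σ_k Σ_i ...
        have step3 : ∀ k : Fin (j+1),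
            ∑ i : Fin N, g i (v k) * ∑ π : Equiv.Perm (Fin j), ψ i ((Fin.removeNth k v) ∘ π)
            = ∑ π : Equiv.Perm (Fin j), φ (Fin.cons (v k) ((Fin.removeNth k v) ∘ π)) := by
          intro k
          have h1 : ∀ i : Fin N,
              g i (v k) * ∑ π : Equiv.Perm (Fin j), ψ i ((Fin.removeNth k v) ∘ π)
              = ∑ π : Equiv.Perm (Fin j), ψ i ((Fin.removeNth k v) ∘ π) * g i (v k) := by
            intro i
            rw [Finset.mul_sum]
            exact Finset.sum_congr rfl fun π _ => mul_comm _ _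
          rw [Finset.sum_congr rfl fun i _ => h1 i, Finset.sum_comm]
          exact Finset.sum_congr rfl fun π _ => (hφψ (v k) ((Fin.removeNth k v) ∘ π)).symm
        rw [Finset.sum_congr rfl fun k _ => step3 k]
        -- LHS = Σ_k Σ_π φ (cons (v k) (removeNth k v ∘ π))
        -- RHS = Σ_ρ φ (v ∘ ρ); use the bijection pdec
        have step4 : ∀ (p : Fin (j+1) × Equiv.Perm (Fin j)),
            φ (v ∘ (pdec p)) = φ (Fin.cons (v p.1) ((Fin.removeNth p.1 v) ∘ p.2)) := by
          intro p
          refine congrArg φ (funext fun x => ?_)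
          refine Fin.cases ?_ (fun i => ?_) x
          · show v (pdec p 0) = _
            rw [pdec_zero, Fin.cons_zero]
          · show v (pdec p i.succ) = _
            rw [pdec_succ, Fin.cons_succ]
            rfl
        rw [← Equiv.sum_comp (Equiv.ofBijective pdec pdec_bijective)
          (fun ρ => φ (v ∘ ρ))]
        have step5 : ∀ p : Fin (j+1) × Equiv.Perm (Fin j),
            φ (v ∘ (Equiv.ofBijective pdec pdec_bijective) p)
              = φ (Fin.cons (v p.1) ((Fin.removeNth p.1 v) ∘ p.2)) := fun p => step4 p
        rw [Finset.sum_congr rfl fun p _ => step5 p]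
        rw [Fintype.sum_prod_type]

end Expand

section Final

variable {F : Type*} {R : Type*} [Field F] [CommRing R] [Algebra F R]

local notation "P" => IsDiffOpOfOrderLE F R

lemma ofFn_get_of_length {l : List R} {m : ℕ} (h : l.length = m) :
    List.ofFn (fun i : Fin m => l.get (Fin.cast h.symm i)) = l := by
  subst h
  simp [List.ofFn_get]

lemma mem_adjoin_isDiffOp {θ : Module.End F R}
    (h : θ ∈ Algebra.adjoin F (genSet F R)) : ∃ j, P j θ := by
  induction h using Algebra.adjoin_induction with
  | mem x hx =>
      rcases hx with ⟨r, rfl⟩ | ⟨δ, rfl⟩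
      · exact ⟨0, P_Mc r⟩
      · exact ⟨1, P_der δ⟩
  | algebraMap c =>
      refine ⟨0, ?_⟩
      have h1 : algebraMap F (Module.End F R) c = Mc F (algebraMap F R c) := by
        ext x
        simp [Module.algebraMap_end_apply, Algebra.smul_def]
      rw [h1]
      exact P_Mc _
  | add x y _ _ hx hy =>
      obtain ⟨j, hj⟩ := hx
      obtain ⟨k, hk⟩ := hy
      exact ⟨max j k, P_add (P_le (le_max_left _ _) hj) (P_le (le_max_right _ _) hk)⟩
  | mul x y _ _ hx hy =>
      obtain ⟨j, hj⟩ := hx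
      obtain ⟨k, hk⟩ := hy
      exact ⟨j + k, P_mul (j + k) le_rfl hj hk⟩

lemma isDiffOp_mem_adjoin [CharZero F]
    [Module.Finite R (Derivation F R R)] [Module.Projective R (Derivation F R R)] :
    ∀ (j : ℕ) (θ : Module.End F R), P j θ → θ ∈ Algebra.adjoin F (genSet F R) := by
  intro j
  induction j with
  | zero =>
      intro θ h
      rw [P0_eq h]
      exact Algebra.subset_adjoin (Set.mem_union_left _ ⟨θ 1, rfl⟩)
  | succ j ih =>
      intro θ hθ
      obtain ⟨Θ, hmem, hord, hform⟩ := expand (j+1)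
        (fun v => itb θ (List.ofFn v) 1) (symbol_MD hθ)
      have hsym : ∀ v : Fin (j+1) → R,
          itb Θ (List.ofFn v) 1 = (j+1).factorial • itb θ (List.ofFn v) 1 := by
        intro v
        rw [hform v]
        have h2 : ∀ ρ : Equiv.Perm (Fin (j+1)),
            itb θ (List.ofFn (v ∘ ρ)) 1 = itb θ (List.ofFn v) 1 := fun ρ => by
          rw [itb_comp_perm]
        rw [Finset.sum_congr rfl fun ρ _ => h2 ρ, Finset.sum_const, Finset.card_univ,
          Fintype.card_perm, Fintype.card_fin]
      set c : F := (((j+1).factorial : F))⁻¹ with hc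
      have hfac : ((j+1).factorial : F) ≠ 0 :=
        Nat.cast_ne_zero.mpr (Nat.factorial_ne_zero _)
      set θ' : Module.End F R := θ - c • Θ with hθ'def
      have hθ'P : P (j+1) θ' := P_sub hθ (P_smul c hord)
      have hzero : ∀ l : List R, l.length = j + 1 → itb θ' l = 0 := by
        intro l hl
        have h0 : P 0 (itb θ' l) := by
          apply P_itb
          have he : (0 : ℕ) + l.length = j + 1 := by omega
          rw [he]
          exact hθ'P
        apply P0_eq_zero h0
        have hofn : List.ofFn (fun i : Fin (j+1) => l.get (Fin.cast hl.symm i)) = l :=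
          ofFn_get_of_length hl
        rw [hθ'def, itb_sub, itb_smul, LinearMap.sub_apply, LinearMap.smul_apply, ← hofn]
        rw [hsym]
        rw [← Nat.cast_smul_eq_nsmul F, smul_smul, inv_mul_cancel₀ hfac, one_smul, sub_self]
      have hP' : P j θ' := P_list.mpr hzero
      have h1 := ih θ' hP'
      have h2 : θ = θ' + c • Θ := by rw [hθ'def]; abel
      rw [h2]
      exact add_mem h1 (Subalgebra.smul_mem _ hmem c)

end Final

/-- If `R` satisfies Hypothesis H over a field `F` of characteristic `0`, then the set
`D(R, F)` of `F`-linear differential operators of finite order on `R` equals the `F`-subalgebra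
of `End_F(R)` generated by the multiplication operators together with the `F`-linear
derivations of `R`. -/
theorem diffOps_eq_adjoin_derivations
    {F R : Type*} [Field F] [CommRing R] [Algebra F R] {n : ℕ}
    (hH : HypothesisH F R n) :
    {θ : Module.End F R | ∃ j, IsDiffOpOfOrderLE F R j θ} =
      ↑(Algebra.adjoin F
        ((Set.range fun r : R => (LinearMap.mulLeft F r : Module.End F R)) ∪
          (Set.range fun δ : Derivation F R R => (δ : R →ₗ[F] R)))) := by
  haveI := hH.charZero
  haveI := hH.der_finite
  haveI := hH.der_projective
  ext θ
  simp only [Set.mem_setOf_eq, SetLike.mem_coe]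
  constructor
  · rintro ⟨j, hj⟩
    exact isDiffOp_mem_adjoin j θ hj
  · intro h
    exact mem_adjoin_isDiffOp h
end
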